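/- The catching-up criterion implies the fixed-step catching-up criterion, but not conversely: for all real sequences u, v, if there exists T* such that ∑_{t=1}^{T} u_t ≥ ∑_{t=1}^{T} v_t for all T ≥ T*, then there exists k such that ∑_{t=1}^{kT} u_t ≥ ∑_{t=1}^{kT} v_t for all T ≥ 1; moreover, for u = (1,0,1,0,…) and v = (0,1,0,1,…) one has u ≻^C v (strict catching-up dominance) while u ∼^{fix-C} v (fixed-step indifference, witnessed by k = 2). -/

import Mathlib

/-- partial sum of the first `T` terms -/
noncomputable def S (w : ℕ → ℝ) (T : ℕ) : ℝ := ∑ t ∈ Finset.range T, w t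

/-- catching-up criterion -/
def CatchUp (u v : ℕ → ℝ) : Prop := ∃ T0 : ℕ, ∀ T ≥ T0, S v T ≤ S u T

/-- fixed-step catching-up criterion -/
def FixCatchUp (u v : ℕ → ℝ) : Prop :=
  ∃ k : ℕ, 0 < k ∧ ∀ T : ℕ, 1 ≤ T → S v (k * T) ≤ S u (k * T)

lemma S_succ (w : ℕ → ℝ) (T : ℕ) : S w (T + 1) = S w T + w T := by
  simp [S, Finset.sum_range_succ]

lemma key (T : ℕ) :
    S (fun t => if Even t then (1 : ℝ) else 0) T
      = S (fun t => if Even t then (0 : ℝ) else 1) T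
        + (if Even T then 0 else 1) := by
  induction T with
  | zero => simp [S]
  | succ n ih =>
    rw [S_succ, S_succ, ih]
    by_cases h : Even n
    · simp [h, Nat.even_add_one, h]
    · simp [h, Nat.even_add_one, h]

theorem stmt_17 :
    (∀ u v : ℕ → ℝ, CatchUp u v → FixCatchUp u v) ∧
    (CatchUp (fun t => if Even t then (1 : ℝ) else 0) (fun t => if Even t then (0 : ℝ) else 1) ∧
      ¬ CatchUp (fun t => if Even t then (0 : ℝ) else 1) (fun t => if Even t then (1 : ℝ) else 0)) ∧
    ((∀ T : ℕ, 1 ≤ T →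
        S (fun t => if Even t then (0 : ℝ) else 1) (2 * T) ≤
          S (fun t => if Even t then (1 : ℝ) else 0) (2 * T)) ∧
      (∀ T : ℕ, 1 ≤ T →
        S (fun t => if Even t then (1 : ℝ) else 0) (2 * T) ≤
          S (fun t => if Even t then (0 : ℝ) else 1) (2 * T))) := by
  refine ⟨?_, ⟨?_, ?_⟩, ?_, ?_⟩
  · rintro u v ⟨T0, hT0⟩
    refine ⟨T0 + 1, Nat.succ_pos _, fun T hT => ?_⟩
    apply hT0
    calc T0 ≤ T0 + 1 := Nat.le_succ _
      _ = (T0 + 1) * 1 := (mul_one _).symm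
      _ ≤ (T0 + 1) * T := Nat.mul_le_mul_left _ hT
  · refine ⟨0, fun T _ => ?_⟩
    rw [key T]
    by_cases h : Even T <;> simp [h]
  · rintro ⟨T0, hT0⟩
    have := hT0 (2 * T0 + 1) (by omega)
    rw [key (2 * T0 + 1)] at this
    have he : ¬ Even (2 * T0 + 1) := by simp [Nat.even_add_one, parity_simps]
    simp [he] at this
    linarith
  · intro T _
    rw [key (2 * T)]
    simp [parity_simps]
  · intro T _
    rw [key (2 * T)]
    simp [parity_simps]
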